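/- Let A ∈ ℝ^{n×n} be symmetric positive semidefinite, 1 ≤ t ≤ r ≤ n, and J_t = {j_1,…,j_t} ⊆ {1,…,n} with A(J_t,J_t) invertible. Assume E_{r−t}(A − A_{J_t}) > 0. Then the ratio N/D equals (r−t+1) · E_{r−t+1}(A − A_{J_t}) / E_{r−t}(A − A_{J_t}), where D is the sum over all ordered tuples (j_{t+1},…,j_r) of pairwise distinct indices in {1,…,n} ∖ J_t of det(A(J,J)) with J = J_t ∪ {j_{t+1},…,j_r}, and N is the corresponding sum of det(A(J,J)) · ‖A − A_J‖_* restricted to tuples for which A(J,J) is invertible. -/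

import Mathlib

open Matrix Finset

/-- Cross approximation `A_J = A(:,J) A(J,J)⁻¹ A(J,:)` built on the principal submatrix
indexed by the finite index set `J`. -/
noncomputable def crossApprox {n : ℕ} (A : Matrix (Fin n) (Fin n) ℝ) (J : Finset (Fin n)) :
    Matrix (Fin n) (Fin n) ℝ :=
  A.submatrix id (Subtype.val : J → Fin n) *
    (A.submatrix (Subtype.val : J → Fin n) (Subtype.val : J → Fin n))⁻¹ *
    A.submatrix (Subtype.val : J → Fin n) id

/-- Determinant of the principal submatrix `A(J,J)`. -/
noncomputable def pminor {n : ℕ} (A : Matrix (Fin n) (Fin n) ℝ) (J : Finset (Fin n)) : ℝ :=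
  (A.submatrix (Subtype.val : J → Fin n) (Subtype.val : J → Fin n)).det

/-- Nuclear norm: sum of the singular values of `M`, i.e. of the square roots of the
eigenvalues of `Mᴴ M`. -/
noncomputable def nuclearNorm {n : ℕ} (M : Matrix (Fin n) (Fin n) ℝ) : ℝ :=
  ∑ i, Real.sqrt ((show (Mᵀ * M).IsHermitian from Matrix.isHermitian_conjTranspose_mul_self M).eigenvalues i)

/-- Frobenius norm. -/
noncomputable def frobNorm {n : ℕ} (M : Matrix (Fin n) (Fin n) ℝ) : ℝ :=
  Real.sqrt (∑ i, ∑ j, (M i j) ^ 2)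

/-- Spectral norm: the largest singular value. -/
noncomputable def specNorm {n : ℕ} (M : Matrix (Fin n) (Fin n) ℝ) : ℝ :=
  ⨆ i, Real.sqrt ((show (Mᵀ * M).IsHermitian from Matrix.isHermitian_conjTranspose_mul_self M).eigenvalues i)

/-- Max norm: largest magnitude of an entry. -/
noncomputable def maxNorm {n : ℕ} (M : Matrix (Fin n) (Fin n) ℝ) : ℝ :=
  ⨆ i, ⨆ j, |M i j|

/-- The tuple `f` sorted in nonincreasing order. -/
noncomputable def sortedDesc {m : ℕ} (f : Fin m → ℝ) : Fin m → ℝ :=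
  fun i => -(((fun j => -f j) ∘ Tuple.sort fun j => -f j) i)

/-- `Esum M k` is the sum of all `k × k` principal minors of `M`. -/
noncomputable def Esum {n : ℕ} (M : Matrix (Fin n) (Fin n) ℝ) (k : ℕ) : ℝ :=
  ∑ K ∈ Finset.powersetCard k (Finset.univ : Finset (Fin n)), pminor M K


section emb
variable {n : ℕ} (J : Finset (Fin n))

/-- inclusion matrix -/
noncomputable def emb : Matrix (Fin n) J ℝ :=
  Matrix.of fun i j => if i = (j : Fin n) then 1 else 0

lemma mul_emb {m : Type*} [Fintype m] (M : Matrix m (Fin n) ℝ) :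
    M * emb J = M.submatrix id (Subtype.val : J → Fin n) := by
  ext i j
  simp [emb, Matrix.mul_apply]

lemma embT_mul {m : Type*} (M : Matrix (Fin n) m ℝ) :
    (emb J)ᵀ * M = M.submatrix (Subtype.val : J → Fin n) id := by
  ext i j
  simp [emb, Matrix.mul_apply]

end emb

section residual
variable {n : ℕ} {A : Matrix (Fin n) (Fin n) ℝ} {J : Finset (Fin n)}

lemma pminor_isUnit (hJ : pminor A J ≠ 0) :
    IsUnit (A.submatrix (Subtype.val : J → Fin n) (Subtype.val : J → Fin n)).det :=
  isUnit_iff_ne_zero.mpr hJ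

lemma residual_eq_conj (hA : Aᵀ = A) (hJ : pminor A J ≠ 0) :
    A - crossApprox A J =
      (1 - emb J * (A.submatrix (Subtype.val : J → Fin n) (Subtype.val : J → Fin n))⁻¹ *
          A.submatrix (Subtype.val : J → Fin n) id)ᵀ * A *
        (1 - emb J * (A.submatrix (Subtype.val : J → Fin n) (Subtype.val : J → Fin n))⁻¹ *
          A.submatrix (Subtype.val : J → Fin n) id) := by
  set P := A.submatrix (Subtype.val : J → Fin n) (Subtype.val : J → Fin n) with hPdef
  set Y := A.submatrix (Subtype.val : J → Fin n) id with hYdef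
  set C := A.submatrix id (Subtype.val : J → Fin n) with hCdef
  have hcross : crossApprox A J = C * P⁻¹ * Y := rfl
  have hPunit : IsUnit P.det := pminor_isUnit hJ
  have hPt : Pᵀ = P := by rw [hPdef, Matrix.transpose_submatrix, hA]
  have hPinv : P⁻¹ᵀ = P⁻¹ := by rw [Matrix.transpose_nonsing_inv, hPt]
  have hYt : Yᵀ = C := by rw [hYdef, hCdef, Matrix.transpose_submatrix, hA]
  have hC : A * emb J = C := mul_emb J A
  have hY : (emb J)ᵀ * A = Y := embT_mul J A
  have hP2 : Y * emb J = P := by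
    rw [mul_emb J Y, hYdef, Matrix.submatrix_submatrix, hPdef]
    rfl
  set Q := emb J * P⁻¹ * Y with hQdef
  have hQt : Qᵀ = C * P⁻¹ * (emb J)ᵀ := by
    rw [hQdef, Matrix.transpose_mul, Matrix.transpose_mul, hYt, hPinv, Matrix.mul_assoc]
  have h2 : A * Q = crossApprox A J := by
    rw [hcross, hQdef, ← Matrix.mul_assoc, ← Matrix.mul_assoc, hC]
  have h1 : Qᵀ * A = crossApprox A J := by
    rw [hcross, hQt, Matrix.mul_assoc, hY]
  have h3 : Qᵀ * (A * Q) = crossApprox A J := by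
    rw [hQt, hQdef, hcross]
    calc C * P⁻¹ * (emb J)ᵀ * (A * (emb J * P⁻¹ * Y))
        = C * P⁻¹ * ((emb J)ᵀ * A * emb J) * (P⁻¹ * Y) := by
          simp only [Matrix.mul_assoc]
      _ = C * (P⁻¹ * P * P⁻¹) * Y := by
          rw [hY, hP2]; simp only [Matrix.mul_assoc]
      _ = C * P⁻¹ * Y := by
          rw [Matrix.nonsing_inv_mul P hPunit, Matrix.one_mul, Matrix.mul_assoc]
  have expand : (1 - Q)ᵀ * A * (1 - Q) = A - Qᵀ * A - (A * Q - Qᵀ * (A * Q)) := by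
    simp only [Matrix.transpose_sub, Matrix.transpose_one, Matrix.sub_mul, Matrix.mul_sub,
      Matrix.one_mul, Matrix.mul_one, Matrix.mul_assoc]
  rw [expand, h3, h1, h2]
  abel

lemma posSemidef_transpose_eq (hA : A.PosSemidef) : Aᵀ = A := by
  rw [← Matrix.conjTranspose_eq_transpose_of_trivial]; exact hA.1

lemma residual_posSemidef (hA : A.PosSemidef) (hJ : pminor A J ≠ 0) :
    (A - crossApprox A J).PosSemidef := by
  rw [residual_eq_conj (posSemidef_transpose_eq hA) hJ]
  rw [show (1 - emb J * (A.submatrix (Subtype.val : J → Fin n) (Subtype.val : J → Fin n))⁻¹ *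
      A.submatrix (Subtype.val : J → Fin n) id)ᵀ =
    (1 - emb J * (A.submatrix (Subtype.val : J → Fin n) (Subtype.val : J → Fin n))⁻¹ *
      A.submatrix (Subtype.val : J → Fin n) id)ᴴ from
    (Matrix.conjTranspose_eq_transpose_of_trivial _).symm]
  exact hA.conjTranspose_mul_mul_same _

end residual

section residual2
variable {n : ℕ} {A : Matrix (Fin n) (Fin n) ℝ} {J : Finset (Fin n)}

lemma residual_submatrix_row_zero (hA : Aᵀ = A) (hJ : pminor A J ≠ 0) :
    (A - crossApprox A J).submatrix (Subtype.val : J → Fin n) id = 0 := by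
  set P := A.submatrix (Subtype.val : J → Fin n) (Subtype.val : J → Fin n) with hPdef
  set Y := A.submatrix (Subtype.val : J → Fin n) id with hYdef
  set C := A.submatrix id (Subtype.val : J → Fin n) with hCdef
  have hcross : crossApprox A J = C * P⁻¹ * Y := rfl
  have h1 : (A - crossApprox A J).submatrix (Subtype.val : J → Fin n) id =
      (emb J)ᵀ * (A - crossApprox A J) := (embT_mul J _).symm
  have hEC : (emb J)ᵀ * C = P := by
    rw [embT_mul J C, hCdef, Matrix.submatrix_submatrix, hPdef]
    rfl
  rw [h1, Matrix.mul_sub, embT_mul J A, hcross, ← Matrix.mul_assoc, ← Matrix.mul_assoc, hEC,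
    Matrix.mul_nonsing_inv P (pminor_isUnit hJ), Matrix.one_mul, ← hYdef, sub_self]

lemma residual_row_zero (hA : Aᵀ = A) (hJ : pminor A J ≠ 0) {i : Fin n} (hi : i ∈ J)
    (j : Fin n) : (A - crossApprox A J) i j = 0 := by
  have := congrFun (congrFun (residual_submatrix_row_zero hA hJ) ⟨i, hi⟩) j
  simpa using this

lemma residual_col_zero (hA : A.PosSemidef) (hJ : pminor A J ≠ 0) {j : Fin n} (hj : j ∈ J)
    (i : Fin n) : (A - crossApprox A J) i j = 0 := by
  have hsym := posSemidef_transpose_eq (residual_posSemidef hA hJ)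
  rw [← hsym]
  exact residual_row_zero (posSemidef_transpose_eq hA) hJ hj i

/-- equivalence between `J ⊕ K` and the union, for disjoint finsets -/
noncomputable def unionEquiv {J K : Finset (Fin n)} (hd : Disjoint J K) :
    (J ⊕ K : Type) ≃ ((J ∪ K : Finset (Fin n)) : Type) := by
  refine Equiv.ofBijective
    (Sum.elim (fun a => ⟨a.1, Finset.mem_union_left _ a.2⟩)
      (fun b => ⟨b.1, Finset.mem_union_right _ b.2⟩)) ⟨?_, ?_⟩
  · rintro (a | a) (b | b) hab <;> simp only [Sum.elim_inl, Sum.elim_inr, Subtype.mk.injEq] at hab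
    · exact congrArg Sum.inl (Subtype.ext hab)
    · exact absurd (hab ▸ b.2) (Finset.disjoint_left.mp hd a.2)
    · exact absurd (hab ▸ b.2) (Finset.disjoint_right.mp hd a.2)
    · exact congrArg Sum.inr (Subtype.ext hab)
  · rintro ⟨x, hx⟩
    rcases Finset.mem_union.mp hx with h | h
    · exact ⟨Sum.inl ⟨x, h⟩, rfl⟩
    · exact ⟨Sum.inr ⟨x, h⟩, rfl⟩

lemma pminor_union (hA : Aᵀ = A) (hJ : pminor A J ≠ 0) {K : Finset (Fin n)}
    (hd : Disjoint J K) :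
    pminor A (J ∪ K) = pminor A J * pminor (A - crossApprox A J) K := by
  classical
  set P := A.submatrix (Subtype.val : J → Fin n) (Subtype.val : J → Fin n) with hPdef
  haveI : Invertible P := Matrix.invertibleOfIsUnitDet P (pminor_isUnit hJ)
  have hre : ((A.submatrix (Subtype.val : (J ∪ K : Finset (Fin n)) → Fin n)
      (Subtype.val : (J ∪ K : Finset (Fin n)) → Fin n)).submatrix (unionEquiv hd) (unionEquiv hd))
      = Matrix.fromBlocks P
        (A.submatrix (Subtype.val : J → Fin n) (Subtype.val : K → Fin n))
        (A.submatrix (Subtype.val : K → Fin n) (Subtype.val : J → Fin n))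
        (A.submatrix (Subtype.val : K → Fin n) (Subtype.val : K → Fin n)) := by
    ext i j
    rcases i with a | a <;> rcases j with b | b <;> rfl
  have hdet : pminor A (J ∪ K) = (Matrix.fromBlocks P
        (A.submatrix (Subtype.val : J → Fin n) (Subtype.val : K → Fin n))
        (A.submatrix (Subtype.val : K → Fin n) (Subtype.val : J → Fin n))
        (A.submatrix (Subtype.val : K → Fin n) (Subtype.val : K → Fin n))).det := by
    rw [pminor, ← Matrix.det_submatrix_equiv_self (unionEquiv hd), hre]
  have hcrossSub : (crossApprox A J).submatrix (Subtype.val : K → Fin n)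
      (Subtype.val : K → Fin n) =
      A.submatrix (Subtype.val : K → Fin n) (Subtype.val : J → Fin n) * P⁻¹ *
        A.submatrix (Subtype.val : J → Fin n) (Subtype.val : K → Fin n) := by
    rw [crossApprox,
      Matrix.submatrix_mul _ _ _ id _ Function.bijective_id,
      Matrix.submatrix_mul _ _ _ id _ Function.bijective_id]
    simp [Matrix.submatrix_submatrix, Function.comp_def]
    rfl
  have hsplit : (A - crossApprox A J).submatrix (Subtype.val : K → Fin n)
      (Subtype.val : K → Fin n) =
      A.submatrix (Subtype.val : K → Fin n) (Subtype.val : K → Fin n) -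
        (crossApprox A J).submatrix (Subtype.val : K → Fin n) (Subtype.val : K → Fin n) := rfl
  rw [hdet, Matrix.det_fromBlocks₁₁, Matrix.invOf_eq_nonsing_inv, pminor, pminor, hsplit,
    hcrossSub]

end residual2

section nuclear
variable {n : ℕ}

lemma nuclearNorm_eq_trace {M : Matrix (Fin n) (Fin n) ℝ} (hM : M.PosSemidef) :
    nuclearNorm M = M.trace := by
  have hP : (Mᴴ * M).PosSemidef := Matrix.posSemidef_conjTranspose_mul_self M
  have hsq : M ^ 2 = Mᴴ * M := by rw [pow_two, hM.1]
  have hMsqrt : M = hP.1.cfc Real.sqrt := by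
    have hsa : IsSelfAdjoint M := hM.1
    rw [← hP.1.cfc_eq, ← hsq, ← cfc_pow_id (R := ℝ) M 2 hsa, ← cfc_comp' (R := ℝ) Real.sqrt (· ^ 2) M]
    conv_lhs => rw [← cfc_id' ℝ M hsa]
    refine cfc_congr fun x hx => ?_
    rw [hM.1.spectrum_real_eq_range_eigenvalues] at hx
    obtain ⟨i, rfl⟩ := hx
    simp [Real.sqrt_sq (hM.eigenvalues_nonneg i)]
  have htr : (hP.1.cfc Real.sqrt).trace =
      (Matrix.diagonal ((RCLike.ofReal ∘ Real.sqrt ∘ hP.1.eigenvalues : Fin n → ℝ))).trace := by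
    rw [Matrix.IsHermitian.cfc, Unitary.conjStarAlgAut_apply, Matrix.trace_mul_cycle, Unitary.coe_star_mul_self,
      Matrix.one_mul]
  unfold nuclearNorm
  conv_rhs => rw [hMsqrt]
  rw [htr, Matrix.trace_diagonal]
  rfl

end nuclear

section vanish
variable {n : ℕ} {B : Matrix (Fin n) (Fin n) ℝ}

/-- a principal minor with a row in the zero set vanishes -/
lemma pminor_zero_row {K : Finset (Fin n)} {i : Fin n} (hi : i ∈ K)
    (hrow : ∀ j, B i j = 0) : pminor B K = 0 := by
  apply Matrix.det_eq_zero_of_row_eq_zero ⟨i, hi⟩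
  intro j
  exact hrow _

/-- for PSD matrices, vanishing principal minors are monotone under inclusion -/
lemma pminor_zero_mono (hB : B.PosSemidef) {K L : Finset (Fin n)} (hKL : K ⊆ L)
    (hK : pminor B K = 0) : pminor B L = 0 := by
  classical
  obtain ⟨v, hv, hv0⟩ := (Matrix.exists_mulVec_eq_zero_iff).mpr hK
  set V : Fin n → ℝ := fun x => if h : x ∈ K then v ⟨x, h⟩ else 0 with hV
  set w : {x // x ∈ L} → ℝ := fun x => V x.1 with hw
  have hML : (B.submatrix (Subtype.val : L → Fin n) (Subtype.val : L → Fin n)).PosSemidef :=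
    hB.submatrix _
  have hwne : w ≠ 0 := by
    obtain ⟨k, hk⟩ := Function.ne_iff.mp hv
    intro h0
    apply hk
    have := congrFun h0 ⟨(k : Fin n), hKL k.2⟩
    simpa [hw, hV, k.2, Subtype.coe_eta] using this
  have hVK : ∀ x : {a // a ∈ K}, V x.1 = v x := by
    intro x
    simp [hV, x.2, Subtype.coe_eta]
  have key : star w ⬝ᵥ ((B.submatrix (Subtype.val : L → Fin n)
      (Subtype.val : L → Fin n)) *ᵥ w) = 0 := by
    have inner : ∀ x : Fin n, x ∈ K →
        (∑ y ∈ L, B x y * V y) = ∑ y ∈ K, B x y * V y := by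
      intro x _
      refine (Finset.sum_subset hKL ?_).symm
      intro y _ hyK
      simp [hV, hyK]
    calc star w ⬝ᵥ ((B.submatrix _ _) *ᵥ w)
        = ∑ x : {a // a ∈ L}, V x.1 * ∑ y : {a // a ∈ L}, B x.1 y.1 * V y.1 := by
          simp [dotProduct, Matrix.mulVec, hw]
      _ = ∑ x ∈ L, V x * ∑ y ∈ L, B x y * V y := by
          rw [← Finset.sum_coe_sort L (fun x => V x * ∑ y ∈ L, B x y * V y)]
          refine Finset.sum_congr rfl fun x _ => ?_
          rw [← Finset.sum_coe_sort L (fun y => B x.1 y * V y)]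
      _ = ∑ x ∈ K, V x * ∑ y ∈ K, B x y * V y := by
          rw [← Finset.sum_subset hKL]
          · exact Finset.sum_congr rfl fun x hx => by rw [inner x hx]
          · intro x _ hxK
            simp [hV, hxK]
      _ = ∑ x : {a // a ∈ K}, v x * ∑ y : {a // a ∈ K}, B x.1 y.1 * v y := by
          rw [← Finset.sum_coe_sort K (fun x => V x * ∑ y ∈ K, B x y * V y)]
          refine Finset.sum_congr rfl fun x _ => ?_
          rw [hVK x, ← Finset.sum_coe_sort K (fun y => B x.1 y * V y)]
          congr 1
          exact Finset.sum_congr rfl fun y _ => by rw [hVK y]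
      _ = star v ⬝ᵥ ((B.submatrix (Subtype.val : K → Fin n)
            (Subtype.val : K → Fin n)) *ᵥ v) := by
          simp [dotProduct, Matrix.mulVec]
      _ = 0 := by rw [hv0, dotProduct_zero]
  have hmv : (B.submatrix (Subtype.val : L → Fin n) (Subtype.val : L → Fin n)) *ᵥ w = 0 :=
    (hML.dotProduct_mulVec_zero_iff w).mp key
  exact Matrix.exists_mulVec_eq_zero_iff.mp ⟨w, hwne, hmv⟩

end vanish

section counting
variable {n : ℕ}

open scoped Classical in
lemma insert_count (g : Finset (Fin n) → ℝ) (k : ℕ) :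
    ∑ K ∈ Finset.powersetCard k (Finset.univ : Finset (Fin n)), ∑ i ∈ Kᶜ, g (insert i K)
      = (k + 1 : ℝ) * ∑ L ∈ Finset.powersetCard (k + 1) (Finset.univ : Finset (Fin n)), g L := by
  classical
  have rhs : ∀ L ∈ Finset.powersetCard (k + 1) (Finset.univ : Finset (Fin n)),
      (k + 1 : ℝ) * g L = ∑ i ∈ L, g L := by
    intro L hL
    rw [Finset.sum_const, nsmul_eq_mul, (Finset.mem_powersetCard.mp hL).2]
    push_cast
    ring
  rw [Finset.mul_sum, Finset.sum_congr rfl rhs, Finset.sum_sigma', Finset.sum_sigma']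
  refine Finset.sum_nbij' (fun p => ⟨insert p.2 p.1, p.2⟩) (fun p => ⟨p.1.erase p.2, p.2⟩)
    ?_ ?_ ?_ ?_ ?_
  · rintro ⟨K, i⟩ hp
    simp only [Finset.mem_sigma, Finset.mem_powersetCard, Finset.mem_compl] at hp ⊢
    obtain ⟨⟨_, hcard⟩, hi⟩ := hp
    exact ⟨⟨Finset.subset_univ _, by rw [Finset.card_insert_of_notMem hi, hcard]⟩,
      Finset.mem_insert_self _ _⟩
  · rintro ⟨L, i⟩ hp
    simp only [Finset.mem_sigma, Finset.mem_powersetCard, Finset.mem_compl] at hp ⊢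
    obtain ⟨⟨_, hcard⟩, hi⟩ := hp
    exact ⟨⟨Finset.subset_univ _, by rw [Finset.card_erase_of_mem hi, hcard]; rfl⟩,
      Finset.notMem_erase _ _⟩
  · rintro ⟨K, i⟩ hp
    simp only [Finset.mem_sigma, Finset.mem_compl] at hp
    simp [Finset.erase_insert hp.2]
  · rintro ⟨L, i⟩ hp
    simp only [Finset.mem_sigma] at hp
    simp [Finset.insert_erase hp.2]
  · rintro ⟨K, i⟩ _
    rfl

end counting

section fiber
variable {n k : ℕ}

open scoped Classical in
lemma card_emb_fiber {K : Finset (Fin n)} (hK : K.card = k) :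
    (Finset.univ.filter (fun f : Fin k ↪ Fin n => Finset.univ.map f = K)).card = Nat.factorial k := by
  classical
  have hcardK : Fintype.card {x // x ∈ K} = k := by simp [Fintype.card_coe, hK]
  have e0 : Fin k ≃ {x // x ∈ K} := Fintype.equivOfCardEq (by simp [hcardK])
  have hcb : (Finset.univ : Finset (Fin k ≃ {x // x ∈ K})).card =
      (Finset.univ.filter (fun f : Fin k ↪ Fin n => Finset.univ.map f = K)).card := by
    refine Finset.card_bij
      (fun e _ => e.toEmbedding.trans (Function.Embedding.subtype _)) ?_ ?_ ?_
    · intro e _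
      simp only [Finset.mem_filter, Finset.mem_univ, true_and]
      ext x
      simp only [Finset.mem_map, Function.Embedding.trans_apply,
        Function.Embedding.coe_subtype, Equiv.coe_toEmbedding]
      constructor
      · rintro ⟨i, -, rfl⟩; exact (e i).2
      · intro hx; exact ⟨e.symm ⟨x, hx⟩, Finset.mem_univ _, by simp⟩
    · intro e₁ _ e₂ _ h
      refine Equiv.ext fun i => Subtype.ext ?_
      exact congrFun (congrArg (fun f : Fin k ↪ Fin n => (f : Fin k → Fin n)) h) i
    · intro f hf
      simp only [Finset.mem_filter, Finset.mem_univ, true_and] at hf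
      have hmem : ∀ i, f i ∈ K := by
        intro i; rw [← hf]; exact Finset.mem_map_of_mem f (Finset.mem_univ i)
      have hbij : Function.Bijective (fun i => (⟨f i, hmem i⟩ : {x // x ∈ K})) := by
        rw [Fintype.bijective_iff_injective_and_card]
        exact ⟨fun a b hab => f.injective (congrArg Subtype.val hab), by simp [hcardK]⟩
      refine ⟨Equiv.ofBijective _ hbij, Finset.mem_univ _, ?_⟩
      ext i
      rfl
  rw [← hcb, Finset.card_univ, Fintype.card_equiv e0, Fintype.card_fin]

open scoped Classical in
lemma sum_emb_eq (T : Finset (Fin n)) (g : Finset (Fin n) → ℝ) :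
    ∑ f ∈ Finset.univ.filter (fun f : Fin k ↪ Fin n => ∀ i, f i ∉ T), g (Finset.univ.map f)
      = (Nat.factorial k : ℝ) * ∑ K ∈ Finset.powersetCard k Tᶜ, g K := by
  classical
  have hmaps : ∀ f ∈ Finset.univ.filter (fun f : Fin k ↪ Fin n => ∀ i, f i ∉ T),
      Finset.univ.map f ∈ Finset.powersetCard k Tᶜ := by
    intro f hf
    simp only [Finset.mem_filter, Finset.mem_univ, true_and] at hf
    rw [Finset.mem_powersetCard]
    constructor
    · intro x hx
      obtain ⟨i, -, rfl⟩ := Finset.mem_map.mp hx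
      exact Finset.mem_compl.mpr (hf i)
    · simp
  rw [← Finset.sum_fiberwise_of_maps_to hmaps (fun f => g (Finset.univ.map f)),
    Finset.mul_sum]
  refine Finset.sum_congr rfl fun K hK => ?_
  obtain ⟨hKsub, hKcard⟩ := Finset.mem_powersetCard.mp hK
  have hfib : (Finset.univ.filter (fun f : Fin k ↪ Fin n => ∀ i, f i ∉ T)).filter
      (fun f => Finset.univ.map f = K) =
      Finset.univ.filter (fun f : Fin k ↪ Fin n => Finset.univ.map f = K) := by
    ext f
    simp only [Finset.filter_filter, Finset.mem_filter, Finset.mem_univ, true_and]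
    constructor
    · exact fun h => h.2
    · intro h
      refine ⟨fun i => ?_, h⟩
      have : f i ∈ K := h ▸ Finset.mem_map_of_mem f (Finset.mem_univ i)
      exact Finset.mem_compl.mp (hKsub this)
  rw [hfib]
  have hval : ∀ f ∈ Finset.univ.filter (fun f : Fin k ↪ Fin n => Finset.univ.map f = K),
      g (Finset.univ.map f) = g K := by
    intro f hf
    rw [(Finset.mem_filter.mp hf).2]
  rw [Finset.sum_congr rfl hval, Finset.sum_const, card_emb_fiber hKcard, nsmul_eq_mul]

end fiber

section assemble
variable {n : ℕ} {A : Matrix (Fin n) (Fin n) ℝ} {Jt : Finset (Fin n)}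

lemma pminor_singleton (M : Matrix (Fin n) (Fin n) ℝ) (i : Fin n) : pminor M {i} = M i i := by
  classical
  haveI : Unique {x // x ∈ ({i} : Finset (Fin n))} :=
    ⟨⟨⟨i, Finset.mem_singleton_self i⟩⟩, fun a => Subtype.ext (Finset.mem_singleton.mp a.2)⟩
  have hd : ((default : {x // x ∈ ({i} : Finset (Fin n))}) : Fin n) = i :=
    Finset.mem_singleton.mp (default : {x // x ∈ ({i} : Finset (Fin n))}).2
  rw [pminor, Matrix.det_unique, Matrix.submatrix_apply, hd]

lemma Esum_eq_compl {B : Matrix (Fin n) (Fin n) ℝ}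
    (hzero : ∀ i ∈ Jt, ∀ j, B i j = 0) (m : ℕ) :
    Esum B m = ∑ K ∈ Finset.powersetCard m Jtᶜ, pminor B K := by
  classical
  refine (Finset.sum_subset (Finset.powersetCard_mono (Finset.subset_univ _)) ?_).symm
  intro K hK hKn
  have hns : ¬ K ⊆ Jtᶜ := by
    intro hsub
    exact hKn (Finset.mem_powersetCard.mpr ⟨hsub, (Finset.mem_powersetCard.mp hK).2⟩)
  obtain ⟨i, hiK, hiJt⟩ := Finset.not_subset.mp hns
  exact pminor_zero_row hiK (hzero i (by simpa using hiJt))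

/-- the key per-subset identity -/
lemma key_K (hA : A.PosSemidef) (hJt : pminor A Jt ≠ 0) {K : Finset (Fin n)}
    (hKsub : K ⊆ Jtᶜ) :
    pminor A (Jt ∪ K) * nuclearNorm (A - crossApprox A (Jt ∪ K)) =
      pminor A Jt * ∑ i ∈ Kᶜ, pminor (A - crossApprox A Jt) (insert i K) := by
  classical
  have hAt : Aᵀ = A := posSemidef_transpose_eq hA
  have hBpsd : (A - crossApprox A Jt).PosSemidef := residual_posSemidef hA hJt
  have hd : Disjoint Jt K := by
    rw [Finset.disjoint_left]
    intro a haJt haK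
    exact (Finset.mem_compl.mp (hKsub haK)) haJt
  have hdetJK : pminor A (Jt ∪ K) = pminor A Jt * pminor (A - crossApprox A Jt) K :=
    pminor_union hAt hJt hd
  by_cases hBK : pminor (A - crossApprox A Jt) K = 0
  · rw [hdetJK, hBK, mul_zero, zero_mul]
    rw [Finset.sum_congr rfl (fun i _ =>
      pminor_zero_mono hBpsd (Finset.subset_insert i K) hBK), Finset.sum_const, smul_zero,
      mul_zero]
  · have hJK : pminor A (Jt ∪ K) ≠ 0 := by
      rw [hdetJK]; exact mul_ne_zero hJt hBK
    have hCpsd : (A - crossApprox A (Jt ∪ K)).PosSemidef := residual_posSemidef hA hJK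
    have hν : nuclearNorm (A - crossApprox A (Jt ∪ K)) =
        ∑ i, (A - crossApprox A (Jt ∪ K)) i i := by
      rw [nuclearNorm_eq_trace hCpsd, Matrix.trace]
      rfl
    have hterm : ∀ i : Fin n, pminor A (Jt ∪ K) * (A - crossApprox A (Jt ∪ K)) i i =
        if i ∈ (Jt ∪ K)ᶜ then pminor A Jt * pminor (A - crossApprox A Jt) (insert i K)
        else 0 := by
      intro i
      by_cases hiJ : i ∈ Jt ∪ K
      · rw [residual_row_zero hAt hJK hiJ i, mul_zero, if_neg (by simp only [Finset.mem_compl, not_not]; exact hiJ)]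
      · have hdi : Disjoint (Jt ∪ K) ({i} : Finset (Fin n)) := by
          simpa [Finset.disjoint_singleton_right] using hiJ
        have h1 : pminor A ((Jt ∪ K) ∪ {i}) =
            pminor A (Jt ∪ K) * (A - crossApprox A (Jt ∪ K)) i i := by
          rw [pminor_union hAt hJK hdi, pminor_singleton]
        have hJU : (Jt ∪ K) ∪ {i} = Jt ∪ insert i K := by
          rw [Finset.union_assoc, Finset.union_comm K {i}]
          rfl
        have hdi2 : Disjoint Jt (insert i K) := by
          rw [Finset.disjoint_right]
          intro a ha
          rcases Finset.mem_insert.mp ha with rfl | haK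
          · exact fun hc => hiJ (Finset.mem_union_left _ hc)
          · exact fun hc => (Finset.mem_compl.mp (hKsub haK)) hc
        have h2 : pminor A ((Jt ∪ K) ∪ {i}) =
            pminor A Jt * pminor (A - crossApprox A Jt) (insert i K) := by
          rw [hJU]; exact pminor_union hAt hJt hdi2
        rw [← h1, h2, if_pos (Finset.mem_compl.mpr hiJ)]
    calc pminor A (Jt ∪ K) * nuclearNorm (A - crossApprox A (Jt ∪ K))
        = ∑ i, pminor A (Jt ∪ K) * (A - crossApprox A (Jt ∪ K)) i i := by
          rw [hν, Finset.mul_sum]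
      _ = ∑ i, (if i ∈ (Jt ∪ K)ᶜ then
            pminor A Jt * pminor (A - crossApprox A Jt) (insert i K) else 0) :=
          Finset.sum_congr rfl fun i _ => hterm i
      _ = ∑ i ∈ (Jt ∪ K)ᶜ, pminor A Jt * pminor (A - crossApprox A Jt) (insert i K) := by
          rw [Finset.sum_ite_mem, Finset.univ_inter]
      _ = ∑ i ∈ Kᶜ, pminor A Jt * pminor (A - crossApprox A Jt) (insert i K) := by
          refine Finset.sum_subset (Finset.compl_subset_compl.mpr
            Finset.subset_union_right) ?_
          intro i hiK hiJ
          have hiJt : i ∈ Jt := by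
            have hin : i ∈ Jt ∪ K := by rwa [Finset.mem_compl, not_not] at hiJ
            rcases Finset.mem_union.mp hin with h | h
            · exact h
            · exact absurd h (by simpa using hiK)
          rw [pminor_zero_row (Finset.mem_insert_self i K)
            (fun j => residual_row_zero hAt hJt hiJt j), mul_zero]
      _ = pminor A Jt * ∑ i ∈ Kᶜ, pminor (A - crossApprox A Jt) (insert i K) := by
          rw [Finset.mul_sum]

end assemble


open scoped Classical in
/-- conditional-expectation identity. With `D` the sum, over ordered tuples of
`r - t` pairwise distinct indices outside `J_t`, of `det A(J,J)` (`J = J_t ∪ {tuple}`), and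
`N` the corresponding sum of `det A(J,J) · ‖A - A_J‖_*` over tuples with `A(J,J)` invertible,
one has `N / D = (r-t+1) · E_{r-t+1}(A - A_{J_t}) / E_{r-t}(A - A_{J_t})`. -/
theorem conditional_expectation_nuclear_error {n r t : ℕ}
    (A : Matrix (Fin n) (Fin n) ℝ) (hA : A.PosSemidef)
    (ht : 1 ≤ t) (htr : t ≤ r) (hrn : r ≤ n)
    (Jt : Finset (Fin n)) (hJtcard : Jt.card = t) (hJtinv : pminor A Jt ≠ 0)
    (hE : 0 < Esum (A - crossApprox A Jt) (r - t)) :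
    (∑ f ∈ Finset.univ.filter (fun f : Fin (r - t) ↪ Fin n =>
          (∀ i, f i ∉ Jt) ∧ pminor A (Jt ∪ Finset.univ.map f) ≠ 0),
        pminor A (Jt ∪ Finset.univ.map f) *
          nuclearNorm (A - crossApprox A (Jt ∪ Finset.univ.map f))) /
      (∑ f ∈ Finset.univ.filter (fun f : Fin (r - t) ↪ Fin n => ∀ i, f i ∉ Jt),
        pminor A (Jt ∪ Finset.univ.map f)) =
      ((r - t + 1 : ℕ) : ℝ) * Esum (A - crossApprox A Jt) (r - t + 1) /
        Esum (A - crossApprox A Jt) (r - t) := by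
  classical
  have hAt : Aᵀ = A := posSemidef_transpose_eq hA
  have hrows : ∀ i ∈ Jt, ∀ j, (A - crossApprox A Jt) i j = 0 :=
    fun i hi j => residual_row_zero hAt hJtinv hi j
  have hdisj : ∀ {K : Finset (Fin n)}, K ⊆ Jtᶜ → Disjoint Jt K := by
    intro K hsub
    rw [Finset.disjoint_left]
    exact fun {a} haJt haK => (Finset.mem_compl.mp (hsub haK)) haJt
  -- denominator
  have hDalt : ∑ K ∈ Finset.powersetCard (r - t) Jtᶜ, pminor A (Jt ∪ K) =
      pminor A Jt * Esum (A - crossApprox A Jt) (r - t) := by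
    rw [Esum_eq_compl hrows, Finset.mul_sum]
    refine Finset.sum_congr rfl fun K hK => ?_
    exact pminor_union hAt hJtinv (hdisj (Finset.mem_powersetCard.mp hK).1)
  have hD : (∑ f ∈ Finset.univ.filter (fun f : Fin (r - t) ↪ Fin n => ∀ i, f i ∉ Jt),
      pminor A (Jt ∪ Finset.univ.map f)) =
      (Nat.factorial (r - t) : ℝ) * (pminor A Jt * Esum (A - crossApprox A Jt) (r - t)) := by
    have h1 : (∑ f ∈ Finset.univ.filter (fun f : Fin (r - t) ↪ Fin n => ∀ i, f i ∉ Jt),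
        pminor A (Jt ∪ Finset.univ.map f)) =
        (Nat.factorial (r - t) : ℝ) * ∑ K ∈ Finset.powersetCard (r - t) Jtᶜ,
          pminor A (Jt ∪ K) := sum_emb_eq Jt (fun K => pminor A (Jt ∪ K))
    rw [h1, hDalt]
  -- numerator
  have hNfil : (∑ f ∈ Finset.univ.filter (fun f : Fin (r - t) ↪ Fin n =>
        (∀ i, f i ∉ Jt) ∧ pminor A (Jt ∪ Finset.univ.map f) ≠ 0),
      pminor A (Jt ∪ Finset.univ.map f) *
        nuclearNorm (A - crossApprox A (Jt ∪ Finset.univ.map f))) =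
      ∑ f ∈ Finset.univ.filter (fun f : Fin (r - t) ↪ Fin n => ∀ i, f i ∉ Jt),
        pminor A (Jt ∪ Finset.univ.map f) *
          nuclearNorm (A - crossApprox A (Jt ∪ Finset.univ.map f)) := by
    refine Finset.sum_subset ?_ ?_
    · intro f hf
      simp only [Finset.mem_filter, Finset.mem_univ, true_and] at hf ⊢
      exact hf.1
    · intro f hfP hfPQ
      simp only [Finset.mem_filter, Finset.mem_univ, true_and] at hfP hfPQ
      have h0 : pminor A (Jt ∪ Finset.univ.map f) = 0 := by
        by_contra hne
        exact hfPQ ⟨hfP, hne⟩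
      rw [h0, zero_mul]
  have hNalt : ∑ K ∈ Finset.powersetCard (r - t) Jtᶜ,
      pminor A (Jt ∪ K) * nuclearNorm (A - crossApprox A (Jt ∪ K)) =
      pminor A Jt * (((r - t : ℕ) + 1 : ℝ) * Esum (A - crossApprox A Jt) (r - t + 1)) := by
    calc ∑ K ∈ Finset.powersetCard (r - t) Jtᶜ,
        pminor A (Jt ∪ K) * nuclearNorm (A - crossApprox A (Jt ∪ K))
        = ∑ K ∈ Finset.powersetCard (r - t) Jtᶜ,
            pminor A Jt * ∑ i ∈ Kᶜ, pminor (A - crossApprox A Jt) (insert i K) :=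
          Finset.sum_congr rfl fun K hK =>
            key_K hA hJtinv (Finset.mem_powersetCard.mp hK).1
      _ = pminor A Jt * ∑ K ∈ Finset.powersetCard (r - t) Jtᶜ,
            ∑ i ∈ Kᶜ, pminor (A - crossApprox A Jt) (insert i K) := by
          rw [Finset.mul_sum]
      _ = pminor A Jt * ∑ K ∈ Finset.powersetCard (r - t) (Finset.univ : Finset (Fin n)),
            ∑ i ∈ Kᶜ, pminor (A - crossApprox A Jt) (insert i K) := by
          congr 1
          refine Finset.sum_subset (Finset.powersetCard_mono (Finset.subset_univ _)) ?_
          intro K hK hKn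
          have hns : ¬ K ⊆ Jtᶜ := by
            intro hsub
            exact hKn (Finset.mem_powersetCard.mpr ⟨hsub, (Finset.mem_powersetCard.mp hK).2⟩)
          obtain ⟨i0, hi0K, hi0Jt⟩ := Finset.not_subset.mp hns
          have hi0Jt' : i0 ∈ Jt := by simpa using hi0Jt
          refine Finset.sum_eq_zero fun i _ => ?_
          exact pminor_zero_row (Finset.mem_insert_of_mem hi0K)
            (fun j => residual_row_zero hAt hJtinv hi0Jt' j)
      _ = pminor A Jt * (((r - t : ℕ) + 1 : ℝ) * Esum (A - crossApprox A Jt) (r - t + 1)) := by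
          rw [insert_count (fun K => pminor (A - crossApprox A Jt) K) (r - t)]
          rfl
  have hN : (∑ f ∈ Finset.univ.filter (fun f : Fin (r - t) ↪ Fin n =>
        (∀ i, f i ∉ Jt) ∧ pminor A (Jt ∪ Finset.univ.map f) ≠ 0),
      pminor A (Jt ∪ Finset.univ.map f) *
        nuclearNorm (A - crossApprox A (Jt ∪ Finset.univ.map f))) =
      (Nat.factorial (r - t) : ℝ) * (pminor A Jt *
        (((r - t : ℕ) + 1 : ℝ) * Esum (A - crossApprox A Jt) (r - t + 1))) := by
    rw [hNfil]
    have h1 : (∑ f ∈ Finset.univ.filter (fun f : Fin (r - t) ↪ Fin n => ∀ i, f i ∉ Jt),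
        pminor A (Jt ∪ Finset.univ.map f) *
          nuclearNorm (A - crossApprox A (Jt ∪ Finset.univ.map f))) =
        (Nat.factorial (r - t) : ℝ) * ∑ K ∈ Finset.powersetCard (r - t) Jtᶜ,
          pminor A (Jt ∪ K) * nuclearNorm (A - crossApprox A (Jt ∪ K)) :=
      sum_emb_eq Jt (fun K => pminor A (Jt ∪ K) * nuclearNorm (A - crossApprox A (Jt ∪ K)))
    rw [h1, hNalt]
  rw [hN, hD]
  have hfac : (Nat.factorial (r - t) : ℝ) ≠ 0 :=
    Nat.cast_ne_zero.mpr (Nat.factorial_ne_zero _)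
  rw [mul_div_mul_left _ _ hfac, mul_div_mul_left _ _ hJtinv]
  push_cast
  ring
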